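/- Let A be an algebra over a field k, K/k an algebraic Galois extension with group G, and A_K = K ⊗_k A. For θ ∈ G let θ̃ be the A-automorphism of A_K with θ̃(λ⊗a) = θ(λ)⊗a. If b ∈ A_K satisfies: for every θ ∈ G there exists λ ∈ K^* with θ̃(b) = λb, then there exists μ ∈ K^* such that μb ∈ A (identifying A with 1 ⊗ A ⊆ A_K). -/

import Mathlib

open TensorProduct

/-- An element of a Galois extension fixed by all automorphisms lies in the base field. -/
lemma fixed_mem_range_algebraMap {k K : Type*} [Field k] [Field K] [Algebra k K]
    [IsGalois k K] (x : K) (hx : ∀ σ : K ≃ₐ[k] K, σ x = x) :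
    x ∈ (algebraMap k K).range := by
  classical
  have hint : IsIntegral k x := Algebra.IsIntegral.isIntegral x
  have halg : IsAlgebraic k x := hint.isAlgebraic
  have hsep : (minpoly k x).Separable := Algebra.IsSeparable.isSeparable k x
  have hsplit : Polynomial.Splits ((minpoly k x).map (algebraMap k K)) :=
    Normal.splits inferInstance x
  set q := (minpoly k x).map (algebraMap k K) with hq
  have hq0 : q ≠ 0 :=
    Polynomial.map_ne_zero (minpoly.ne_zero hint)
  have hnodup : q.roots.Nodup := Polynomial.nodup_roots (Polynomial.Separable.map hsep)
  have hroots : ∀ y ∈ q.roots, y = x := by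
    intro y hy
    have hyroot : Polynomial.aeval y (minpoly k x) = 0 := by
      have := Polynomial.isRoot_of_mem_roots hy
      rwa [Polynomial.IsRoot, hq, Polynomial.eval_map, ← Polynomial.aeval_def] at this
    obtain ⟨σ, hσ⟩ := minpoly.exists_algEquiv_of_root' halg hyroot
    rw [← hσ, hx σ]
  have hxmem : x ∈ q.roots := by
    rw [Polynomial.mem_roots hq0]
    show Polynomial.eval x q = 0
    rw [hq, Polynomial.eval_map, ← Polynomial.aeval_def]
    exact minpoly.aeval k x
  have hcard : q.roots.card = 1 := by
    have h1 : q.roots.toFinset ⊆ {x} := fun y hy =>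
      Finset.mem_singleton.mpr (hroots y (Multiset.mem_toFinset.mp hy))
    have h2 : q.roots.toFinset.card = q.roots.card := Multiset.toFinset_card_of_nodup hnodup
    have h3 : q.roots.toFinset.card ≤ 1 := (Finset.card_le_card h1).trans_eq rfl
    have h4 : 0 < q.roots.card := Multiset.card_pos_iff_exists_mem.mpr ⟨x, hxmem⟩
    omega
  have hdeg : (minpoly k x).natDegree = 1 := by
    rw [← Polynomial.natDegree_map (algebraMap k K), ← hq, hsplit.natDegree_eq_card_roots, hcard]
  exact minpoly.natDegree_eq_one_iff.mp hdeg

theorem stmt18 {k K A : Type*} [Field k] [Field K] [Algebra k K] [IsGalois k K]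
    [CommRing A] [Algebra k A]
    (b : K ⊗[k] A)
    (hb : ∀ θ : K ≃ₐ[k] K, ∃ lam : K, lam ≠ 0 ∧
      (Algebra.TensorProduct.map θ.toAlgHom (AlgHom.id k A)) b = lam • b) :
    ∃ mu : K, mu ≠ 0 ∧
      mu • b ∈ Set.range (Algebra.TensorProduct.includeRight : A →ₐ[k] K ⊗[k] A) := by
  classical
  by_cases hb0 : b = 0
  · exact ⟨1, one_ne_zero, ⟨0, by rw [hb0, smul_zero, map_zero]⟩⟩
  set B := Module.Basis.ofVectorSpace k A with hB
  set BK := B.baseChange K with hBK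
  -- the induced maps act on coordinates through θ
  have hact : ∀ (θ : K ≃ₐ[k] K) (x : K ⊗[k] A) (i),
      BK.repr ((Algebra.TensorProduct.map θ.toAlgHom (AlgHom.id k A)) x) i
        = θ (BK.repr x i) := by
    intro θ x
    induction x using TensorProduct.induction_on with
    | zero => simp
    | tmul c a =>
      intro i
      simp only [Algebra.TensorProduct.map_tmul, AlgHom.coe_id, id_eq, hBK,
        Module.Basis.baseChange_repr_tmul, AlgEquiv.coe_algHom]
      rw [Algebra.smul_def, Algebra.smul_def, map_mul, AlgEquiv.commutes]
    | add u v hu hv =>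
      intro i
      simp only [map_add, Finsupp.add_apply, hu, hv]
  set c := BK.repr b with hc
  have hcne : ∃ i, c i ≠ 0 := by
    by_contra h
    push_neg at h
    apply hb0
    exact BK.repr.map_eq_zero_iff.mp (by rw [← hc]; exact Finsupp.ext h)
  obtain ⟨i0, hi0⟩ := hcne
  refine ⟨(c i0)⁻¹, inv_ne_zero hi0, ?_⟩
  -- each coefficient of (c i0)⁻¹ • b is fixed by the Galois group
  have hfix : ∀ i, ((c i0)⁻¹ * c i) ∈ (algebraMap k K).range := by
    intro i
    apply fixed_mem_range_algebraMap
    intro σ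
    obtain ⟨lam, hlam0, hlam⟩ := hb σ
    have h1 : ∀ j, σ (c j) = lam * c j := by
      intro j
      have := congrArg (fun z => BK.repr z j) hlam
      simp only [map_smul, Finsupp.smul_apply, smul_eq_mul] at this
      rw [hact σ b j, ← hc] at this
      exact this
    rw [map_mul, map_inv₀, h1, h1, mul_inv_rev, mul_assoc,
      ← mul_assoc lam⁻¹, inv_mul_cancel₀ hlam0, one_mul]
  -- choose preimages in k
  choose r hr using hfix
  -- express (c i0)⁻¹ • b explicitly
  have hrep : ((c i0)⁻¹ • b) =
      c.support.sum (fun i => ((c i0)⁻¹ * c i) • BK i) := by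
    conv_lhs => rw [← BK.linearCombination_repr b]
    rw [Finsupp.linearCombination_apply, Finsupp.sum, Finset.smul_sum]
    exact Finset.sum_congr rfl fun i _ => by rw [smul_smul, ← hc]
  rw [hrep]
  refine ⟨c.support.sum (fun i => r i • B i), ?_⟩
  rw [map_sum]
  refine Finset.sum_congr rfl fun i _ => ?_
  rw [← hr i]
  simp only [Algebra.TensorProduct.includeRight_apply, hBK, Module.Basis.baseChange_apply]
  rw [algebraMap_smul, TensorProduct.tmul_smul]
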